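/- Let F : ℝ → ℝ be C² with F''(x) ≥ ε > 0 for all x, and let μ be the probability measure with density proportional to exp(-F). Then for every C¹ function f with bounded derivative, Var_μ(f) ≤ ∫ |f'(x)|² / F''(x) dμ(x). -/

import Mathlib

open MeasureTheory Real Set Filter

/-- Cauchy–Schwarz for interval integrals of continuous functions, with a positive weight. -/
private lemma cs_interval {u v : ℝ → ℝ} (hu : Continuous u) (hv : Continuous v)
    (hvpos : ∀ x, 0 < v x) {a b : ℝ} (hab : a ≤ b) :
    (∫ x in a..b, u x * v x) ^ 2 ≤ (∫ x in a..b, u x ^ 2) * (∫ x in a..b, v x ^ 2) := by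
  rcases eq_or_lt_of_le hab with rfl | hlt
  · simp
  set A := ∫ x in a..b, u x ^ 2 with hA
  set B := ∫ x in a..b, u x * v x with hB
  set C := ∫ x in a..b, v x ^ 2 with hC
  have hCpos : 0 < C :=
    intervalIntegral.intervalIntegral_pos_of_pos ((hv.pow 2).intervalIntegrable a b)
      (fun x => pow_pos (hvpos x) 2) hlt
  have h0 : 0 ≤ ∫ x in a..b, (C * u x - B * v x) ^ 2 :=
    intervalIntegral.integral_nonneg hab (fun x _ => sq_nonneg _)
  have hexp : ∫ x in a..b, (C * u x - B * v x) ^ 2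
      = C ^ 2 * A - 2 * C * B * B + B ^ 2 * C := by
    have h1 : (fun x => (C * u x - B * v x) ^ 2)
        = fun x => (C ^ 2 * u x ^ 2 - 2 * C * B * (u x * v x)) + B ^ 2 * v x ^ 2 := by
      funext x; ring
    rw [h1, intervalIntegral.integral_add, intervalIntegral.integral_sub,
      intervalIntegral.integral_const_mul, intervalIntegral.integral_const_mul,
      intervalIntegral.integral_const_mul]
    all_goals apply Continuous.intervalIntegrable
    all_goals fun_prop
  rw [hexp] at h0
  nlinarith [hCpos, h0]

/-- One-dimensional Brascamp–Lieb inequality: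
if `F'' ≥ ε > 0` and `dμ = Z⁻¹ e^{-F} dx`, then for every C¹ function `f`
with bounded derivative, `Var_μ f ≤ ∫ |f'|² / F'' dμ`. -/
theorem brascamp_lieb_one_dim
    (F : ℝ → ℝ) (ε : ℝ) (hε : 0 < ε)
    (hF : ContDiff ℝ 2 F)
    (hF'' : ∀ x, ε ≤ deriv (deriv F) x)
    (Z : ℝ) (hZ : Z = ∫ x, Real.exp (-F x))
    (μ : Measure ℝ)
    (hμ : μ = (volume : Measure ℝ).withDensity
      (fun x => ENNReal.ofReal (Real.exp (-F x) / Z)))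
    (hprob : IsProbabilityMeasure μ)
    (f : ℝ → ℝ) (hf : ContDiff ℝ 1 f)
    (M : ℝ) (hM : ∀ x, |deriv f x| ≤ M) :
    ∫ x, (f x - ∫ y, f y ∂μ) ^ 2 ∂μ
      ≤ ∫ x, (deriv f x) ^ 2 / deriv (deriv F) x ∂μ := by
  -- basic differentiability facts
  obtain ⟨hFdiff, -, hFd1⟩ := contDiff_succ_iff_deriv.mp
    (show ContDiff ℝ (1 + 1) F by exact_mod_cast hF)
  have hc1 : Continuous (deriv F) := hFd1.continuous
  have hc2 : Continuous (deriv (deriv F)) := hFd1.continuous_deriv le_rfl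
  have hd1 : ∀ x, HasDerivAt F (deriv F x) x := fun x => (hFdiff x).hasDerivAt
  have hd2 : ∀ x, HasDerivAt (deriv F) (deriv (deriv F) x) x :=
    fun x => ((hFd1.differentiable one_ne_zero) x).hasDerivAt
  have hfd : Differentiable ℝ f := hf.differentiable one_ne_zero
  have hcf : Continuous f := hf.continuous
  have hcf' : Continuous (deriv f) := hf.continuous_deriv le_rfl
  have hM0 : 0 ≤ M := le_trans (abs_nonneg _) (hM 0)
  have hF''pos : ∀ x, 0 < deriv (deriv F) x := fun x => lt_of_lt_of_le hε (hF'' x)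
  -- slope bound for deriv F
  have hφd : ∀ x, HasDerivAt (fun y => deriv F y - ε * y) (deriv (deriv F) x - ε) x := by
    intro x
    exact ((hd2 x).sub ((hasDerivAt_id x).const_mul ε)).congr_deriv (by ring)
  have hφmono : Monotone (fun y => deriv F y - ε * y) := by
    apply monotone_of_deriv_nonneg (fun x => (hφd x).differentiableAt)
    intro x
    rw [(hφd x).deriv]
    linarith [hF'' x]
  have hslope : ∀ {s t : ℝ}, s ≤ t → deriv F s + ε * (t - s) ≤ deriv F t := by
    intro s t hst
    have := hφmono hst
    simp only at this
    linarith
  -- existence of the critical point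
  obtain ⟨x₀, hx₀⟩ : ∃ x₀, deriv F x₀ = 0 := by
    set a := -(|deriv F 0| / ε) with ha
    set b := |deriv F 0| / ε with hb
    have hab : a ≤ b := by
      have : 0 ≤ |deriv F 0| / ε := div_nonneg (abs_nonneg _) hε.le
      simp only [ha, hb]; linarith
    have hbnn : 0 ≤ b := div_nonneg (abs_nonneg _) hε.le
    have hεb : ε * b = |deriv F 0| := by
      rw [hb, mul_div_cancel₀ _ (ne_of_gt hε)]
    have hfa : deriv F a ≤ 0 := by
      have h1 := hslope (show a ≤ 0 by rw [ha]; linarith)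
      have h3 : ε * (0 - a) = |deriv F 0| := by rw [ha, zero_sub, neg_neg]; exact hεb
      have := le_abs_self (deriv F 0)
      linarith
    have hfb : 0 ≤ deriv F b := by
      have h1 := hslope (show (0:ℝ) ≤ b from hbnn)
      have h3 : ε * (b - 0) = |deriv F 0| := by rw [sub_zero]; exact hεb
      have := neg_abs_le (deriv F 0)
      linarith
    have := intermediate_value_Icc hab (hc1.continuousOn)
    obtain ⟨x₀, -, hx₀⟩ := this ⟨hfa, hfb⟩
    exact ⟨x₀, hx₀⟩
  -- the weight function and auxiliary functions
  set g : ℝ → ℝ := fun x => deriv f x ^ 2 / deriv (deriv F) x with hgdef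
  have hgc : Continuous g := (hcf'.pow 2).div hc2 (fun x => ne_of_gt (hF''pos x))
  have hgnn : ∀ x, 0 ≤ g x := fun x => div_nonneg (sq_nonneg _) (hF''pos x).le
  have hgle : ∀ x, g x ≤ M ^ 2 / ε := by
    intro x
    have h1 : deriv f x ^ 2 ≤ M ^ 2 := by
      obtain ⟨h2, h3⟩ := abs_le.mp (hM x)
      nlinarith
    exact div_le_div₀ (by positivity) h1 hε (hF'' x)
  set c : ℝ := f x₀ with hcdef
  have hlip : ∀ x, |f x - c| ≤ M * |x - x₀| := by
    intro x
    have := Convex.norm_image_sub_le_of_norm_deriv_le (f := f) (s := univ)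
      (fun y _ => hfd y) (fun y _ => by simpa [Real.norm_eq_abs] using hM y)
      convex_univ (mem_univ x₀) (mem_univ x)
    simpa [Real.norm_eq_abs] using this
  -- quadratic lower bound on F
  have hquad : ∀ x, F x₀ + ε / 2 * (x - x₀) ^ 2 ≤ F x := by
    have hq : ∀ t : ℝ, HasDerivAt (fun y => ε / 2 * (y - x₀) ^ 2) (ε * (t - x₀)) t := by
      intro t
      have h1 : HasDerivAt (fun y : ℝ => y - x₀) 1 t := (hasDerivAt_id t).sub_const x₀
      have := (h1.pow 2).const_mul (ε / 2)
      exact this.congr_deriv (by norm_num; ring)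
    have hFTC1 : ∀ a b : ℝ, ∫ t in a..b, deriv F t = F b - F a := fun a b =>
      intervalIntegral.integral_eq_sub_of_hasDerivAt (fun x _ => hd1 x)
        (hc1.intervalIntegrable a b)
    have hlinInt : ∀ a b : ℝ, IntervalIntegrable (fun t => ε * (t - x₀)) volume a b :=
      fun a b => (by fun_prop : Continuous fun t => ε * (t - x₀)).intervalIntegrable a b
    have hq2 : ∀ a b : ℝ, ∫ t in a..b, ε * (t - x₀) = ε / 2 * (b - x₀) ^ 2 - ε / 2 * (a - x₀) ^ 2 :=
      fun a b => intervalIntegral.integral_eq_sub_of_hasDerivAt (fun x _ => hq x)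
        (hlinInt _ _)
    intro x
    rcases le_total x₀ x with hx | hx
    · have hmono := intervalIntegral.integral_mono_on hx
        (hlinInt _ _)
        (hc1.intervalIntegrable x₀ x)
        (fun t ht => by have := hslope ht.1; linarith [hx₀])
      rw [hFTC1, hq2] at hmono
      simp only [sub_self] at hmono
      nlinarith [hmono]
    · have hmono := intervalIntegral.integral_mono_on hx
        (hc1.intervalIntegrable x x₀)
        (hlinInt _ _)
        (fun t ht => by have := hslope ht.2; linarith [hx₀])
      rw [hFTC1, hq2] at hmono
      simp only [sub_self] at hmono
      nlinarith [hmono]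
  -- integrability of the weight and of polynomial multiples
  have hexpb : ∀ x, Real.exp (-F x) ≤ Real.exp (-F x₀) * Real.exp (-(ε / 2) * (x - x₀) ^ 2) := by
    intro x
    rw [← Real.exp_add]
    apply Real.exp_le_exp.mpr
    have := hquad x
    linarith
  have hIe : Integrable (fun x => Real.exp (-F x)) := by
    apply Integrable.mono'
      (((integrable_exp_neg_mul_sq (half_pos hε)).comp_sub_right x₀).const_mul (Real.exp (-F x₀)))
    · exact (Real.continuous_exp.comp hF.continuous.neg).aestronglyMeasurable
    · refine ae_of_all _ fun x => ?_
      rw [Real.norm_eq_abs, abs_of_pos (Real.exp_pos _)]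
      exact hexpb x
  have hIq : Integrable (fun x => (x - x₀) ^ 2 * Real.exp (-F x)) := by
    apply Integrable.mono'
      (((integrable_exp_neg_mul_sq (by positivity : (0:ℝ) < ε / 4)).comp_sub_right x₀).const_mul
        (Real.exp (-F x₀) * (4 / ε)))
    · exact ((continuous_id.sub continuous_const).pow 2).aestronglyMeasurable.mul
        (Real.continuous_exp.comp hF.continuous.neg).aestronglyMeasurable
    · refine ae_of_all _ fun x => ?_
      rw [Real.norm_eq_abs, abs_of_nonneg (by positivity)]
      have h1 : (x - x₀) ^ 2 ≤ 4 / ε * Real.exp (ε / 4 * (x - x₀) ^ 2) := by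
        have h2 : ε / 4 * (x - x₀) ^ 2 ≤ Real.exp (ε / 4 * (x - x₀) ^ 2) := by
          have := Real.add_one_le_exp (ε / 4 * (x - x₀) ^ 2)
          linarith
        rw [div_mul_eq_mul_div, le_div_iff₀ hε]
        nlinarith
      calc (x - x₀) ^ 2 * Real.exp (-F x)
          ≤ (x - x₀) ^ 2 * (Real.exp (-F x₀) * Real.exp (-(ε / 2) * (x - x₀) ^ 2)) := by
            apply mul_le_mul_of_nonneg_left (hexpb x) (by positivity)
        _ ≤ (4 / ε * Real.exp (ε / 4 * (x - x₀) ^ 2)) *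
              (Real.exp (-F x₀) * Real.exp (-(ε / 2) * (x - x₀) ^ 2)) := by
            apply mul_le_mul_of_nonneg_right h1 (by positivity)
        _ = Real.exp (-F x₀) * (4 / ε) *
              (Real.exp (ε / 4 * (x - x₀) ^ 2) * Real.exp (-(ε / 2) * (x - x₀) ^ 2)) := by ring
        _ = Real.exp (-F x₀) * (4 / ε) * Real.exp (-(ε / 4) * (x - x₀) ^ 2) := by
            rw [← Real.exp_add]; congr 1; ring
  -- positivity of Z
  have hZpos : 0 < Z := by
    rw [hZ]
    rw [integral_pos_iff_support_of_nonneg (fun x => (Real.exp_pos (-F x)).le) hIe]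
    have hsupp : Function.support (fun x => Real.exp (-F x)) = univ := by
      ext x; simp [Real.exp_ne_zero]
    simp [hsupp]
  -- conversion between μ-integrals and weighted Lebesgue integrals
  have hwc : Continuous (fun x => Real.exp (-F x) / Z) :=
    (Real.continuous_exp.comp hF.continuous.neg).div_const Z
  have hwnn : ∀ x, 0 ≤ Real.exp (-F x) / Z := fun x => div_nonneg (Real.exp_pos _).le hZpos.le
  have hμint : ∀ h : ℝ → ℝ, ∫ x, h x ∂μ = ∫ x, (Real.exp (-F x) / Z) * h x := by
    intro h
    rw [hμ]
    have hrepr : (fun x => ENNReal.ofReal (Real.exp (-F x) / Z))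
        = fun x => ((Real.toNNReal (Real.exp (-F x) / Z) : NNReal) : ENNReal) := rfl
    rw [hrepr, integral_withDensity_eq_integral_smul (hwc.measurable.real_toNNReal) h]
    congr 1
    funext x
    simp [NNReal.smul_def, Real.coe_toNNReal _ (hwnn x), smul_eq_mul]
  have hμI : ∀ (h : ℝ → ℝ) (C D : ℝ), Continuous h → (∀ x, |h x| ≤ C + D * (x - x₀) ^ 2) →
      Integrable h μ := by
    intro h C D hhc hhb
    rw [hμ, integrable_withDensity_iff (hwc.measurable.ennreal_ofReal)
      (ae_of_all _ fun x => ENNReal.ofReal_lt_top)]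
    have : Integrable (fun x => (C / Z) * Real.exp (-F x)
        + (D / Z) * ((x - x₀) ^ 2 * Real.exp (-F x))) volume :=
      (hIe.const_mul _).add (hIq.const_mul _)
    have hfun : (fun x => h x * (ENNReal.ofReal (Real.exp (-F x) / Z)).toReal)
        = fun x => h x * (Real.exp (-F x) / Z) := by
      funext x; rw [ENNReal.toReal_ofReal (hwnn x)]
    rw [hfun]
    apply Integrable.mono' this
    · exact (hhc.mul hwc).aestronglyMeasurable
    · refine ae_of_all _ fun x => ?_
      rw [Real.norm_eq_abs, abs_mul, abs_of_nonneg (hwnn x)]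
      calc |h x| * (Real.exp (-F x) / Z)
          ≤ (C + D * (x - x₀) ^ 2) * (Real.exp (-F x) / Z) :=
            mul_le_mul_of_nonneg_right (hhb x) (hwnn x)
        _ = C / Z * Real.exp (-F x) + D / Z * ((x - x₀) ^ 2 * Real.exp (-F x)) := by ring
  -- the auxiliary primitive of g and the key pointwise Cauchy–Schwarz bound
  set G : ℝ → ℝ := fun x => ∫ t in x₀..x, g t with hGdef
  have hGd : ∀ x, HasDerivAt G (g x) x := fun x =>
    intervalIntegral.integral_hasDerivAt_right (hgc.intervalIntegrable x₀ x)
      (hgc.stronglyMeasurableAtFilter _ _) hgc.continuousAt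
  have hGc : Continuous G := by
    apply continuous_iff_continuousAt.mpr
    exact fun x => (hGd x).continuousAt
  have hGnn : ∀ x, x₀ ≤ x → 0 ≤ G x := fun x hx =>
    intervalIntegral.integral_nonneg hx (fun t _ => hgnn t)
  have hGnp : ∀ x, x ≤ x₀ → G x ≤ 0 := by
    intro x hx
    rw [hGdef]
    simp only [intervalIntegral.integral_symm x x₀]
    have : 0 ≤ ∫ t in x..x₀, g t := intervalIntegral.integral_nonneg hx (fun t _ => hgnn t)
    linarith
  have hCS : ∀ x, (f x - c) ^ 2 ≤ deriv F x * G x := by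
    intro x
    set v : ℝ → ℝ := fun t => Real.sqrt (deriv (deriv F) t) with hvdef
    have hvpos : ∀ t, 0 < v t := fun t => Real.sqrt_pos.mpr (hF''pos t)
    have hvc : Continuous v := Real.continuous_sqrt.comp hc2
    set u : ℝ → ℝ := fun t => deriv f t / v t with hudef
    have huc : Continuous u := hcf'.div hvc (fun t => ne_of_gt (hvpos t))
    have huv : ∀ t, u t * v t = deriv f t := fun t =>
      div_mul_cancel₀ _ (ne_of_gt (hvpos t))
    have hu2 : ∀ t, u t ^ 2 = g t := by
      intro t
      rw [hudef]
      simp only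
      rw [div_pow, Real.sq_sqrt (hF''pos t).le]
    have hv2 : ∀ t, v t ^ 2 = deriv (deriv F) t := fun t => Real.sq_sqrt (hF''pos t).le
    have hFTCf : ∀ a b : ℝ, ∫ t in a..b, deriv f t = f b - f a := fun a b =>
      intervalIntegral.integral_eq_sub_of_hasDerivAt (fun t _ => (hfd t).hasDerivAt)
        (hcf'.intervalIntegrable a b)
    have hFTC2 : ∀ a b : ℝ, ∫ t in a..b, deriv (deriv F) t = deriv F b - deriv F a := fun a b =>
      intervalIntegral.integral_eq_sub_of_hasDerivAt (fun t _ => hd2 t)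
        (hc2.intervalIntegrable a b)
    rcases le_total x₀ x with hx | hx
    · have hcs := cs_interval huc hvc hvpos hx
      have e1 : ∫ t in x₀..x, u t * v t = f x - c := by
        rw [intervalIntegral.integral_congr (fun t _ => huv t), hFTCf, hcdef]
      have e2 : ∫ t in x₀..x, u t ^ 2 = G x := by
        rw [intervalIntegral.integral_congr (fun t _ => hu2 t), hGdef]
      have e3 : ∫ t in x₀..x, v t ^ 2 = deriv F x := by
        rw [intervalIntegral.integral_congr (fun t _ => hv2 t), hFTC2, hx₀, sub_zero]
      rw [e1, e2, e3] at hcs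
      linarith [hcs]
    · have hcs := cs_interval huc hvc hvpos hx
      have e1 : ∫ t in x..x₀, u t * v t = c - f x := by
        rw [intervalIntegral.integral_congr (fun t _ => huv t), hFTCf, hcdef]
      have e2 : ∫ t in x..x₀, u t ^ 2 = -G x := by
        rw [intervalIntegral.integral_congr (fun t _ => hu2 t), hGdef]
        simp only [intervalIntegral.integral_symm x₀ x]
      have e3 : ∫ t in x..x₀, v t ^ 2 = -deriv F x := by
        rw [intervalIntegral.integral_congr (fun t _ => hv2 t), hFTC2, hx₀, zero_sub]
      rw [e1, e2, e3] at hcs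
      nlinarith [hcs]
  -- the two weighted integrands
  have hec : Continuous fun x => Real.exp (-F x) := Real.continuous_exp.comp hF.continuous.neg
  set A : ℝ → ℝ := fun x => Real.exp (-F x) * (f x - c) ^ 2 with hAdef
  set B : ℝ → ℝ := fun x => Real.exp (-F x) * g x with hBdef
  have hAc : Continuous A := hec.mul ((hcf.sub continuous_const).pow 2)
  have hBc : Continuous B := hec.mul hgc
  have hAnn : ∀ x, 0 ≤ A x := fun x => mul_nonneg (Real.exp_pos _).le (sq_nonneg _)
  have hBnn : ∀ x, 0 ≤ B x := fun x => mul_nonneg (Real.exp_pos _).le (hgnn x)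
  have hsqb : ∀ x, (f x - c) ^ 2 ≤ M ^ 2 * (x - x₀) ^ 2 := by
    intro x
    have h1 := hlip x
    nlinarith [sq_abs (f x - c), sq_abs (x - x₀), abs_nonneg (f x - c), abs_nonneg (x - x₀)]
  have hIA : Integrable A := by
    apply Integrable.mono' (hIq.const_mul (M ^ 2))
    · exact hAc.aestronglyMeasurable
    · refine ae_of_all _ fun x => ?_
      rw [Real.norm_eq_abs, abs_of_nonneg (hAnn x)]
      have := hsqb x
      have he := (Real.exp_pos (-F x)).le
      rw [hAdef]
      simp only
      nlinarith
  have hIB : Integrable B := by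
    apply Integrable.mono' (hIe.const_mul (M ^ 2 / ε))
    · exact hBc.aestronglyMeasurable
    · refine ae_of_all _ fun x => ?_
      rw [Real.norm_eq_abs, abs_of_nonneg (hBnn x)]
      have := hgle x
      have he := (Real.exp_pos (-F x)).le
      rw [hBdef]
      simp only
      nlinarith
  -- integration by parts
  have hDc : Continuous fun x => Real.exp (-F x) * g x
      - Real.exp (-F x) * (deriv F x * G x) := (hec.mul hgc).sub (hec.mul (hc1.mul hGc))
  have hHd : ∀ x, HasDerivAt (fun y => Real.exp (-F y) * G y)
      (Real.exp (-F x) * g x - Real.exp (-F x) * (deriv F x * G x)) x := by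
    intro x
    have he : HasDerivAt (fun y => Real.exp (-F y)) (Real.exp (-F x) * -deriv F x) x :=
      (hd1 x).neg.exp
    have := he.mul (hGd x)
    exact this.congr_deriv (by ring)
  have hIBP : ∀ a b : ℝ,
      ∫ x in a..b, (Real.exp (-F x) * g x - Real.exp (-F x) * (deriv F x * G x))
        = Real.exp (-F b) * G b - Real.exp (-F a) * G a := fun a b =>
    intervalIntegral.integral_eq_sub_of_hasDerivAt (fun x _ => hHd x)
      (hDc.intervalIntegrable a b)
  have hIBP2 : ∀ a b : ℝ,
      ∫ x in a..b, Real.exp (-F x) * (deriv F x * G x)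
        = (∫ x in a..b, B x) - (Real.exp (-F b) * G b - Real.exp (-F a) * G a) := by
    intro a b
    have h1 := hIBP a b
    rw [intervalIntegral.integral_sub (f := fun x => Real.exp (-F x) * g x)
      (g := fun x => Real.exp (-F x) * (deriv F x * G x)) ((hec.mul hgc).intervalIntegrable a b)
      ((hec.mul (hc1.mul hGc)).intervalIntegrable a b)] at h1
    rw [hBdef]
    linarith [h1]
  have hmono_ptwise : ∀ x, A x ≤ Real.exp (-F x) * (deriv F x * G x) := by
    intro x
    exact mul_le_mul_of_nonneg_left (hCS x) (Real.exp_pos _).le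
  -- right half-line estimate
  have ERight : ∫ x in Ioi x₀, A x ≤ ∫ x in Ioi x₀, B x := by
    refine le_of_tendsto (intervalIntegral_tendsto_integral_Ioi x₀ hIA.integrableOn tendsto_id) ?_
    filter_upwards [eventually_ge_atTop x₀] with b hb
    calc ∫ x in x₀..b, A x
        ≤ ∫ x in x₀..b, Real.exp (-F x) * (deriv F x * G x) :=
          intervalIntegral.integral_mono_on hb (hAc.intervalIntegrable _ _)
            ((hec.mul (hc1.mul hGc)).intervalIntegrable _ _) (fun x _ => hmono_ptwise x)
      _ = (∫ x in x₀..b, B x) - (Real.exp (-F b) * G b - Real.exp (-F x₀) * G x₀) := hIBP2 x₀ b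
      _ ≤ ∫ x in x₀..b, B x := by
          have h1 : G x₀ = 0 := by rw [hGdef]; simp
          have h2 : 0 ≤ G b := hGnn b hb
          have h3 := (Real.exp_pos (-F b)).le
          rw [h1, mul_zero, sub_zero]
          linarith [mul_nonneg h3 h2]
      _ = ∫ x in Ioc x₀ b, B x := intervalIntegral.integral_of_le hb
      _ ≤ ∫ x in Ioi x₀, B x := by
          apply setIntegral_mono_set hIB.integrableOn (ae_of_all _ hBnn)
          exact HasSubset.Subset.eventuallyLE Ioc_subset_Ioi_self
  -- left half-line estimate
  have ELeft : ∫ x in Iic x₀, A x ≤ ∫ x in Iic x₀, B x := by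
    refine le_of_tendsto (intervalIntegral_tendsto_integral_Iic x₀ hIA.integrableOn tendsto_id) ?_
    filter_upwards [eventually_le_atBot x₀] with a ha
    calc ∫ x in a..x₀, A x
        ≤ ∫ x in a..x₀, Real.exp (-F x) * (deriv F x * G x) :=
          intervalIntegral.integral_mono_on ha (hAc.intervalIntegrable _ _)
            ((hec.mul (hc1.mul hGc)).intervalIntegrable _ _) (fun x _ => hmono_ptwise x)
      _ = (∫ x in a..x₀, B x) - (Real.exp (-F x₀) * G x₀ - Real.exp (-F a) * G a) := hIBP2 a x₀
      _ ≤ ∫ x in a..x₀, B x := by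
          have h1 : G x₀ = 0 := by rw [hGdef]; simp
          have h2 : G a ≤ 0 := hGnp a ha
          have h3 := (Real.exp_pos (-F a)).le
          rw [h1, mul_zero, zero_sub, sub_neg_eq_add]
          linarith [mul_nonpos_of_nonneg_of_nonpos h3 h2]
      _ = ∫ x in Ioc a x₀, B x := intervalIntegral.integral_of_le ha
      _ ≤ ∫ x in Iic x₀, B x := by
          apply setIntegral_mono_set hIB.integrableOn (ae_of_all _ hBnn)
          exact HasSubset.Subset.eventuallyLE Ioc_subset_Iic_self
  have core : ∫ x, A x ≤ ∫ x, B x := by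
    rw [← intervalIntegral.integral_Iic_add_Ioi (b := x₀) hIA.integrableOn hIA.integrableOn,
      ← intervalIntegral.integral_Iic_add_Ioi (b := x₀) hIB.integrableOn hIB.integrableOn]
    exact add_le_add ELeft ERight
  -- transfer to the measure μ
  have step2 : ∫ x, (f x - c) ^ 2 ∂μ ≤ ∫ x, g x ∂μ := by
    rw [hμint (fun x => (f x - c) ^ 2), hμint g]
    have l1 : ∫ x, Real.exp (-F x) / Z * (f x - c) ^ 2 = (1 / Z) * ∫ x, A x := by
      rw [← integral_const_mul]
      congr 1; funext x; rw [hAdef]; ring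
    have l2 : ∫ x, Real.exp (-F x) / Z * g x = (1 / Z) * ∫ x, B x := by
      rw [← integral_const_mul]
      congr 1; funext x; rw [hBdef]; ring
    rw [l1, l2]
    exact mul_le_mul_of_nonneg_left core (by positivity)
  -- variance is minimized at the mean
  set m : ℝ := ∫ y, f y ∂μ with hmdef
  have habs1 : ∀ x : ℝ, |x - x₀| ≤ 1 + (x - x₀) ^ 2 := by
    intro x
    nlinarith [sq_abs (x - x₀), abs_nonneg (x - x₀), sq_nonneg (|x - x₀| - 1)]
  have hIfμ : Integrable f μ := by
    apply hμI f (|c| + M) M hcf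
    intro x
    have h1 := hlip x
    have h2 := habs1 x
    have h3 : |f x| ≤ |f x - c| + |c| := by
      have := abs_add_le (f x - c) c
      simpa using this
    nlinarith
  have hIfc2μ : Integrable (fun x => (f x - c) ^ 2) μ := by
    apply hμI (fun x => (f x - c) ^ 2) 0 (M ^ 2) ((hcf.sub continuous_const).pow 2)
    intro x
    rw [abs_of_nonneg (sq_nonneg _)]
    have := hsqb x
    linarith
  have step1 : ∫ x, (f x - m) ^ 2 ∂μ ≤ ∫ x, (f x - c) ^ 2 ∂μ := by
    have hexpand : (fun x => (f x - m) ^ 2)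
        = fun x => (f x - c) ^ 2 + ((2 * (c - m)) * f x + (c - m) * (-(m + c))) := by
      funext x; ring
    calc ∫ x, (f x - m) ^ 2 ∂μ
        = ∫ x, ((f x - c) ^ 2 + ((2 * (c - m)) * f x + (c - m) * (-(m + c)))) ∂μ := by
          rw [hexpand]
      _ = (∫ x, (f x - c) ^ 2 ∂μ)
            + ((2 * (c - m)) * ∫ x, f x ∂μ + (c - m) * (-(m + c))) := by
          rw [integral_add hIfc2μ (show Integrable
              (fun x => 2 * (c - m) * f x + (c - m) * (-(m + c))) μ from
              (hIfμ.const_mul (2 * (c - m))).add (integrable_const ((c - m) * (-(m + c))))),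
            integral_add (hIfμ.const_mul (2 * (c - m)))
              (integrable_const ((c - m) * (-(m + c)))),
            integral_const_mul, integral_const]
          simp [measure_univ]
      _ = (∫ x, (f x - c) ^ 2 ∂μ) - (c - m) ^ 2 := by
          rw [← hmdef]; ring
      _ ≤ ∫ x, (f x - c) ^ 2 ∂μ := by nlinarith [sq_nonneg (c - m)]
  calc ∫ x, (f x - m) ^ 2 ∂μ ≤ ∫ x, (f x - c) ^ 2 ∂μ := step1
    _ ≤ ∫ x, g x ∂μ := step2
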